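/- Let t_1,...,t_n be distinct points of the circle lying in an open semicircle and m_1,...,m_n positive integers with Σ m_i = 2k. Then the 2k vectors U(t_i) - U(t_n) for i = 1,...,n-1, the derivatives (d^j/dt^j)U(t)|_{t=t_i} for j = 1,...,m_i - 1 (when m_i > 1) for each i, and (d^{m_1}/dt^{m_1})U(t)|_{t=t_1}, are linearly independent in R^{2k}. -/

import Mathlib

open Real Finset


open Polynomial Finset

noncomputable def Dop : Polynomial ℂ → Polynomial ℂ := fun P => X * derivative P

lemma Dop_add (P Q : Polynomial ℂ) : Dop (P + Q) = Dop P + Dop Q := by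
  simp [Dop, derivative_add, mul_add]

lemma Dop_iter_add (r : ℕ) (P Q : Polynomial ℂ) :
    Dop^[r] (P + Q) = Dop^[r] P + Dop^[r] Q := by
  induction r generalizing P Q with
  | zero => simp
  | succ r ih => simp [Function.iterate_succ_apply, Dop_add, ih]

lemma Dop_monomial (e : ℕ) (a : ℂ) : Dop (monomial e a) = monomial e (a * e) := by
  rcases Nat.eq_zero_or_pos e with he | he
  · subst he; simp [Dop]
  · rw [Dop, derivative_monomial]
    rw [X_mul_monomial]
    have he' : e - 1 + 1 = e := by omega
    rw [he']

lemma Dop_iter_monomial (r e : ℕ) (a : ℂ) :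
    Dop^[r] (monomial e a) = monomial e (a * (e : ℂ) ^ r) := by
  induction r with
  | zero => simp
  | succ r ih =>
    rw [Function.iterate_succ_apply', ih, Dop_monomial]
    ring_nf

lemma Dop_iter_sum {ι : Type*} (S : Finset ι) (f : ι → Polynomial ℂ) (r : ℕ) :
    Dop^[r] (∑ j ∈ S, f j) = ∑ j ∈ S, Dop^[r] (f j) := by
  classical
  induction S using Finset.induction with
  | empty =>
    simp only [Finset.sum_empty]
    induction r with
    | zero => simp
    | succ r ih => simp [Function.iterate_succ_apply', ih, Dop]
  | insert _ _ hx ih =>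
    rw [Finset.sum_insert hx, Finset.sum_insert hx, Dop_iter_add, ih]

lemma Dop_iter_factor (z : ℂ) (m : ℕ) :
    ∀ j ≤ m, ∀ Q : Polynomial ℂ, ∃ R : Polynomial ℂ,
      Dop^[j] ((X - C z) ^ m * Q) = (X - C z) ^ (m - j) * R ∧
      R.eval z = (∏ i ∈ Finset.range j, ((m : ℂ) - i)) * z ^ j * Q.eval z := by
  intro j
  induction j with
  | zero =>
    intro _ Q
    exact ⟨Q, by simp, by simp⟩
  | succ j ih =>
    intro hj Q
    obtain ⟨R, hR, hev⟩ := ih (Nat.le_of_succ_le hj) Q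
    have hjm : j < m := hj
    refine ⟨((m - j : ℕ) : Polynomial ℂ) * X * R + (X - C z) * (X * derivative R), ?_, ?_⟩
    · obtain ⟨a, ha⟩ : ∃ a, m - j = a + 1 := ⟨m - (j+1), by omega⟩
      have ha2 : m - (j+1) = a := by omega
      rw [Function.iterate_succ_apply', hR, Dop, derivative_mul, derivative_pow, ha, ha2]
      simp only [Nat.add_sub_cancel, derivative_sub, derivative_X, derivative_C, sub_zero,
        mul_one, map_add, map_one, Polynomial.C_eq_natCast, Nat.cast_add, Nat.cast_one]
      ring
    · have h1 : (((m - j : ℕ) : Polynomial ℂ) : Polynomial ℂ).eval z = ((m - j : ℕ) : ℂ) := by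
        simp
      simp only [eval_add, eval_mul, eval_sub, eval_X, eval_C, sub_self, zero_mul, mul_zero,
        add_zero, h1]
      rw [hev, Finset.prod_range_succ]
      have : ((m - j : ℕ) : ℂ) = (m : ℂ) - j := by
        push_cast [Nat.cast_sub (le_of_lt hjm)]
        ring
      rw [this]
      ring

lemma pow_dvd_of_Dop (z : ℂ) (hz : z ≠ 0) (μ : ℕ) :
    ∀ P : Polynomial ℂ, (∀ r < μ, (Dop^[r] P).eval z = 0) → (X - C z) ^ μ ∣ P := by
  induction μ with
  | zero => intro P _; simp
  | succ μ ih =>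
    intro P h
    obtain ⟨Q, hQ⟩ := ih P (fun r hr => h r (Nat.lt_succ_of_lt hr))
    obtain ⟨R, hR, hev⟩ := Dop_iter_factor z μ μ le_rfl Q
    have h0 : (Dop^[μ] P).eval z = 0 := h μ (Nat.lt_succ_self μ)
    rw [hQ, hR] at h0
    simp only [Nat.sub_self, pow_zero, one_mul] at h0
    rw [hev] at h0
    rcases mul_eq_zero.mp h0 with h1 | hQz
    · exfalso
      rcases mul_eq_zero.mp h1 with h2 | h3
      · have : ∀ i ∈ Finset.range μ, ((μ : ℂ) - i) ≠ 0 := by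
          intro i hi
          have hi' : i < μ := Finset.mem_range.mp hi
          have : ((μ : ℂ) - i) = ((μ - i : ℕ) : ℂ) := by
            push_cast [Nat.cast_sub (le_of_lt hi')]; ring
          rw [this]
          exact_mod_cast Nat.sub_ne_zero_of_lt hi'
        exact Finset.prod_ne_zero_iff.mpr this h2
      · exact pow_ne_zero μ hz h3
    · have : (X - C z) ∣ Q := dvd_iff_isRoot.mpr hQz
      obtain ⟨Q', hQ'⟩ := this
      exact ⟨Q', by rw [hQ, hQ', pow_succ]; ring⟩

lemma pow_dvd_P (S : Finset ℤ) (c : ℤ → ℂ) (N : ℕ) (hS : ∀ j ∈ S, 0 ≤ j + (N : ℤ))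
    (z : ℂ) (hz : z ≠ 0) (μ : ℕ)
    (h : ∀ r < μ, ∑ j ∈ S, c j * (j : ℂ) ^ r * z ^ (j : ℤ) = 0) :
    (X - C z) ^ μ ∣ ∑ j ∈ S, monomial (j + (N : ℤ)).toNat (c j) := by
  apply pow_dvd_of_Dop z hz
  intro r hr
  rw [Dop_iter_sum, eval_finset_sum]
  have key : ∀ j ∈ S, (Dop^[r] (monomial ((j + (N : ℤ)).toNat) (c j))).eval z
      = ∑ i ∈ Finset.range (r+1),
        ((c j * (j : ℂ) ^ i * z ^ (j : ℤ)) * ((N : ℂ) ^ (r-i) * (r.choose i) * z ^ (N : ℤ))) := by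
    intro j hj
    rw [Dop_iter_monomial, eval_monomial]
    have hjN : (((j + (N : ℤ)).toNat : ℕ) : ℤ) = j + N := Int.toNat_of_nonneg (hS j hj)
    have hcast : (((j + (N : ℤ)).toNat : ℕ) : ℂ) = (j : ℂ) + (N : ℂ) := by
      have h2 : ((((j + (N : ℤ)).toNat : ℕ) : ℤ) : ℂ) = ((j + (N:ℤ) : ℤ) : ℂ) := by
        exact_mod_cast congrArg (fun x : ℤ => (x : ℂ)) hjN
      push_cast at h2 ⊢
      exact h2
    have hzpow : z ^ ((j + (N : ℤ)).toNat : ℕ) = z ^ (j : ℤ) * z ^ (N : ℤ) := by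
      rw [← zpow_natCast z, hjN, zpow_add₀ hz]
    rw [hcast, hzpow, add_pow, Finset.mul_sum, Finset.sum_mul]
    refine Finset.sum_congr rfl (fun i hi => by ring)
  rw [Finset.sum_congr rfl key, Finset.sum_comm]
  refine Finset.sum_eq_zero (fun i hi => ?_)
  have hi' : i < μ := lt_of_le_of_lt (Nat.lt_succ_iff.mp (Finset.mem_range.mp hi)) hr
  calc ∑ j ∈ S, (c j * (j:ℂ)^i * z ^ (j:ℤ)) * ((N : ℂ) ^ (r-i) * (r.choose i) * z ^ (N:ℤ))
      = (∑ j ∈ S, c j * (j:ℂ)^i * z ^ (j:ℤ)) * ((N : ℂ) ^ (r-i) * (r.choose i) * z ^ (N:ℤ)) := by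
        rw [Finset.sum_mul]
    _ = 0 := by rw [h i hi', zero_mul]

open Complex Finset

lemma hasDerivAt_cexp_int (j : ℤ) (x : ℝ) :
    HasDerivAt (fun s : ℝ => Complex.exp (Complex.I * j * s))
      (Complex.I * j * Complex.exp (Complex.I * j * x)) x := by
  have h0 : HasDerivAt (fun s : ℝ => ((s : ℂ))) 1 x := by
    simpa using (hasDerivAt_id x).ofReal_comp
  have h1 := h0.const_mul (Complex.I * j)
  have h2 := h1.cexp
  convert h2 using 1
  ring

lemma iteratedDeriv_trigsum (S : Finset ℤ) (c : ℤ → ℂ) (r : ℕ) :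
    iteratedDeriv r (fun s : ℝ => ∑ j ∈ S, c j * Complex.exp (Complex.I * j * s))
      = fun x : ℝ => ∑ j ∈ S, c j * (Complex.I * j) ^ r * Complex.exp (Complex.I * j * x) := by
  induction r with
  | zero => simp
  | succ r ih =>
    funext x
    rw [iteratedDeriv_succ, ih]
    have : HasDerivAt (fun x : ℝ => ∑ j ∈ S, c j * (Complex.I * j) ^ r * Complex.exp (Complex.I * j * x))
        (∑ j ∈ S, c j * (Complex.I * j) ^ (r+1) * Complex.exp (Complex.I * j * x)) x := by
      refine HasDerivAt.fun_sum (fun j hj => ?_)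
      have := (hasDerivAt_cexp_int j x).const_mul (c j * (Complex.I * j) ^ r)
      convert this using 1
      all_goals first | rfl | ring
    exact this.deriv

lemma iteratedDeriv_clm_comp {F G : Type*} [NormedAddCommGroup F] [NormedSpace ℝ F]
    [NormedAddCommGroup G] [NormedSpace ℝ G] (g : F →L[ℝ] G) (f : ℝ → F)
    (hf : ContDiff ℝ ⊤ f) (r : ℕ) :
    iteratedDeriv r (fun x => g (f x)) = fun x => g (iteratedDeriv r f x) := by
  induction r with
  | zero => rfl
  | succ r ih =>
    funext x
    rw [iteratedDeriv_succ, ih, iteratedDeriv_succ]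
    have hd : DifferentiableAt ℝ (iteratedDeriv r f) x :=
      (hf.differentiable_iteratedDeriv r (by simp)).differentiableAt
    exact (g.hasFDerivAt.comp_hasDerivAt x hd.hasDerivAt).deriv

open Finset

lemma sum_interleave (A B : ℕ → ℕ) (r : ℕ) :
    ∑ l ∈ Finset.range (2*r+1), (if l % 2 = 0 then A (l/2) else B (l/2))
      = ∑ i ∈ Finset.range (r+1), A i + ∑ i ∈ Finset.range r, B i := by
  induction r with
  | zero => simp
  | succ r ih =>
    have h1 : 2*(r+1)+1 = (2*r+1) + 1 + 1 := by ring
    rw [h1, Finset.sum_range_succ, Finset.sum_range_succ, ih,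
      Finset.sum_range_succ A (r+1), Finset.sum_range_succ B r]
    have h2 : (2*r+1) % 2 = 1 := by omega
    have h3 : (2*r+1+1) % 2 = 0 := by omega
    have h4 : (2*r+1) / 2 = r := by omega
    have h5 : (2*r+1+1) / 2 = r + 1 := by omega
    rw [h2, h3, h4, h5]
    norm_num
    omega

lemma rolle_multiplicity (g : ℝ → ℝ) (hg : ContDiff ℝ ⊤ g) (a b : ℝ)
    (r : ℕ) (hr : 1 ≤ r) (t : ℕ → ℝ) (μ : ℕ → ℕ)
    (hmono : ∀ i, i + 1 < r → t i < t (i+1))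
    (hmem : ∀ i < r, t i ∈ Set.Ioo a b)
    (hμ : ∀ i < r, 1 ≤ μ i)
    (hz : ∀ i < r, ∀ j < μ i, iteratedDeriv j g (t i) = 0) :
    ∃ (u : ℕ → ℝ) (ν : ℕ → ℕ),
      (∀ l, l + 1 < 2*r - 1 → u l < u (l+1)) ∧
      (∀ l < 2*r - 1, u l ∈ Set.Ioo a b) ∧
      ((∑ l ∈ Finset.range (2*r-1), ν l) + 1 = ∑ i ∈ Finset.range r, μ i) ∧
      (∀ l < 2*r - 1, ∀ j < ν l, iteratedDeriv (j+1) g (u l) = 0) := by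
  have hC : ∀ (x y : ℝ), ContinuousOn g (Set.Icc x y) :=
    fun x y => (hg.continuous).continuousOn
  have hRolle : ∀ i, ∃ y : ℝ, (i + 1 < r → y ∈ Set.Ioo (t i) (t (i+1)) ∧ deriv g y = 0) := by
    intro i
    by_cases h : i + 1 < r
    · have hab : t i < t (i+1) := hmono i h
      have hgi : g (t i) = 0 := by
        have := hz i (by omega) 0 (hμ i (by omega))
        simpa using this
      have hgi1 : g (t (i+1)) = 0 := by
        have := hz (i+1) h 0 (hμ (i+1) h)
        simpa using this
      obtain ⟨y, hy, hy0⟩ := exists_deriv_eq_zero hab (hC _ _) (by rw [hgi, hgi1])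
      exact ⟨y, fun _ => ⟨hy, hy0⟩⟩
    · exact ⟨0, fun h' => absurd h' h⟩
  choose s hs using hRolle
  set u : ℕ → ℝ := fun l => if l % 2 = 0 then t (l/2) else s (l/2) with hu
  set ν : ℕ → ℕ := fun l => if l % 2 = 0 then μ (l/2) - 1 else 1 with hν
  have hueven : ∀ l, l % 2 = 0 → u l = t (l/2) := by intro l h; simp [hu, h]
  have huodd : ∀ l, l % 2 = 1 → u l = s (l/2) := by intro l h; simp [hu, h]
  have hνeven : ∀ l, l % 2 = 0 → ν l = μ (l/2) - 1 := by intro l h; simp [hν, h]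
  have hνodd : ∀ l, l % 2 = 1 → ν l = 1 := by intro l h; simp [hν, h]
  refine ⟨u, ν, ?_, ?_, ?_, ?_⟩
  · intro l hl
    rcases Nat.even_or_odd l with ⟨q, hq⟩ | ⟨q, hq⟩
    · rw [hueven l (by omega), huodd (l+1) (by omega),
        (by omega : l / 2 = q), (by omega : (l+1) / 2 = q)]
      exact ((hs q) (by omega)).1.1
    · rw [huodd l (by omega), hueven (l+1) (by omega),
        (by omega : l / 2 = q), (by omega : (l+1) / 2 = q + 1)]
      exact ((hs q) (by omega)).1.2
  · intro l hl
    rcases Nat.even_or_odd l with ⟨q, hq⟩ | ⟨q, hq⟩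
    · rw [hueven l (by omega), (by omega : l / 2 = q)]
      exact hmem q (by omega)
    · rw [huodd l (by omega), (by omega : l / 2 = q)]
      have hq1 : q + 1 < r := by omega
      have hy := ((hs q) hq1).1
      exact ⟨lt_trans (hmem q (by omega)).1 hy.1, lt_trans hy.2 (hmem (q+1) hq1).2⟩
  · have h2r : 2*r - 1 = 2*(r-1)+1 := by omega
    have hνdef : ∀ l, ν l = if l % 2 = 0 then (fun i => μ i - 1) (l/2) else (fun _ => 1) (l/2) := by
      intro l; rfl
    rw [h2r, Finset.sum_congr rfl (fun l _ => hνdef l),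
      sum_interleave (fun i => μ i - 1) (fun _ => 1) (r-1)]
    have hr1 : r - 1 + 1 = r := by omega
    rw [hr1]
    have hsum1 : ∑ _i ∈ Finset.range (r-1), (1:ℕ) = r - 1 := by simp
    rw [hsum1]
    have : ∑ i ∈ Finset.range r, (μ i - 1) + r = ∑ i ∈ Finset.range r, μ i := by
      have hc := Finset.sum_congr rfl (fun i (hi : i ∈ Finset.range r) =>
        (by have := hμ i (Finset.mem_range.mp hi); omega : μ i - 1 + 1 = μ i))
      calc ∑ i ∈ Finset.range r, (μ i - 1) + r
          = ∑ i ∈ Finset.range r, ((μ i - 1) + 1) := by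
            rw [Finset.sum_add_distrib]; simp
        _ = ∑ i ∈ Finset.range r, μ i := hc
    omega
  · intro l hl j hj
    rcases Nat.even_or_odd l with ⟨q, hq⟩ | ⟨q, hq⟩
    · rw [hνeven l (by omega), (by omega : l / 2 = q)] at hj
      rw [hueven l (by omega), (by omega : l / 2 = q)]
      have hq2 : q < r := by omega
      exact hz q hq2 (j+1) (by have := hμ q hq2; omega)
    · rw [hνodd l (by omega)] at hj
      rw [huodd l (by omega), (by omega : l / 2 = q)]
      have hj0 : j = 0 := by omega
      subst hj0
      rw [iteratedDeriv_one]
      exact ((hs q) (by omega)).2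




lemma sum_range_double {M : Type*} [AddCommMonoid M] (F : ℕ → M) (k : ℕ) :
    ∑ i ∈ Finset.range (2*k), F i = ∑ l ∈ Finset.range k, (F (2*l) + F (2*l+1)) := by
  induction k with
  | zero => simp
  | succ k ih =>
    have h1 : 2*(k+1) = (2*k) + 1 + 1 := by ring
    rw [h1, Finset.sum_range_succ, Finset.sum_range_succ, ih, Finset.sum_range_succ]
    exact add_assoc _ _ _

lemma sum_range_block {M : Type*} [AddCommMonoid M] (F : ℕ → M) (L L' : ℕ) :
    ∑ l ∈ Finset.range (L + L'), F l
      = ∑ l ∈ Finset.range L, F l + ∑ l ∈ Finset.range L', F (L + l) := by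
  induction L' with
  | zero => simp
  | succ L' ih => rw [Nat.add_succ, Finset.sum_range_succ, ih, Finset.sum_range_succ, add_assoc]

lemma chain_lt {u : ℕ → ℝ} {L : ℕ} (h : ∀ l, l + 1 < L → u l < u (l+1)) :
    ∀ l1 l2, l1 < l2 → l2 < L → u l1 < u l2 := by
  intro l1 l2
  induction l2 with
  | zero => omega
  | succ l2 ih =>
    intro h12 h2L
    rcases Nat.lt_or_ge l1 l2 with h' | h'
    · exact lt_trans (ih h' (by omega)) (h l2 h2L)
    · have : l1 = l2 := by omega
      subst this
      exact h l1 h2L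

lemma iteratedDeriv_sub_const' (f : ℝ → ℝ) (cst : ℝ) (j : ℕ) (hj : 1 ≤ j) :
    iteratedDeriv j (fun x => f x - cst) = iteratedDeriv j f := by
  obtain ⟨j', rfl⟩ : ∃ j', j = j' + 1 := ⟨j - 1, by omega⟩
  rw [iteratedDeriv_succ', iteratedDeriv_succ']
  have hd : (deriv fun x => f x - cst) = deriv f := funext fun x => deriv_sub_const cst
  rw [hd]

lemma exp_I_inj {x y : ℝ} (hxy : |x - y| < 2*Real.pi)
    (h : Complex.exp (Complex.I*x) = Complex.exp (Complex.I*y)) : x = y := by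
  rw [Complex.exp_eq_exp_iff_exists_int] at h
  obtain ⟨n, hn⟩ := h
  have h2 : (x : ℂ) = (y : ℂ) + n * (2*(Real.pi:ℂ)) := by
    apply mul_left_cancel₀ Complex.I_ne_zero
    linear_combination hn
  have h3 : x = y + n * (2*Real.pi) := by exact_mod_cast h2
  have hπ := Real.pi_pos
  have habs := abs_lt.mp hxy
  have hcase : (n:ℝ) ≤ -1 ∨ (n:ℝ) = 0 ∨ (1:ℝ) ≤ (n:ℝ) := by
    exact_mod_cast (by omega : n ≤ -1 ∨ n = 0 ∨ 1 ≤ n)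
  rcases hcase with h4 | h4 | h4
  · nlinarith
  · rw [h4] at h3; linarith
  · nlinarith

lemma isCoprime_pow_X_sub_C {z1 z2 : ℂ} (h : z1 ≠ z2) (a b : ℕ) :
    IsCoprime ((Polynomial.X - Polynomial.C z1)^a) ((Polynomial.X - Polynomial.C z2)^b) := by
  apply IsCoprime.pow
  have hz : z1 - z2 ≠ 0 := sub_ne_zero.mpr h
  set u : ℂ := (z1 - z2)⁻¹ with hu
  refine ⟨-Polynomial.C u, Polynomial.C u, ?_⟩
  have h1 : u * (z1 - z2) = 1 := inv_mul_cancel₀ hz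
  calc -Polynomial.C u * (Polynomial.X - Polynomial.C z1)
        + Polynomial.C u * (Polynomial.X - Polynomial.C z2)
      = Polynomial.C u * Polynomial.C z1 - Polynomial.C u * Polynomial.C z2 := by ring
    _ = Polynomial.C (u * z1 - u * z2) := by rw [map_sub, map_mul, map_mul]
    _ = Polynomial.C 1 := by rw [show u*z1 - u*z2 = 1 from by rw [← mul_sub]; exact h1]
    _ = 1 := map_one Polynomial.C

noncomputable def xiN {k : ℕ} (ξ : Fin (2*k) → ℝ) : ℕ → ℝ :=
  fun i => if h : i < 2*k then ξ ⟨i, h⟩ else 0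

noncomputable def cdef {k : ℕ} (ξ : Fin (2*k) → ℝ) : ℤ → ℂ := fun j =>
  if j.natAbs % 2 = 1 ∧ j.natAbs < 2*k then
    ((xiN ξ (j.natAbs - 1) : ℂ) - (if 0 ≤ j then 1 else -1) * Complex.I * (xiN ξ j.natAbs : ℂ)) / 2
  else 0

lemma cdef_odd_pos {k : ℕ} (ξ : Fin (2*k) → ℝ) (l : ℕ) (hl : l < k) :
    cdef ξ (2*(l:ℤ)+1) = ((xiN ξ (2*l) : ℂ) - Complex.I * (xiN ξ (2*l+1) : ℂ)) / 2 := by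
  have h1 : (2*(l:ℤ)+1).natAbs = 2*l+1 := by omega
  simp only [cdef, h1]
  rw [if_pos ⟨by omega, by omega⟩, if_pos (by omega : (0:ℤ) ≤ 2*(l:ℤ)+1)]
  have h4 : 2*l+1-1 = 2*l := by omega
  rw [h4]
  norm_num

lemma cdef_odd_neg {k : ℕ} (ξ : Fin (2*k) → ℝ) (l : ℕ) (hl : l < k) :
    cdef ξ (-(2*(l:ℤ)+1)) = ((xiN ξ (2*l) : ℂ) + Complex.I * (xiN ξ (2*l+1) : ℂ)) / 2 := by
  have h1 : (-(2*(l:ℤ)+1)).natAbs = 2*l+1 := by omega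
  simp only [cdef, h1]
  rw [if_pos ⟨by omega, by omega⟩, if_neg (by omega : ¬ (0:ℤ) ≤ -(2*(l:ℤ)+1))]
  have h4 : 2*l+1-1 = 2*l := by omega
  rw [h4]
  ring

lemma cdef_supp {k : ℕ} (ξ : Fin (2*k) → ℝ) (j : ℤ)
    (h : ¬(j.natAbs % 2 = 1 ∧ j.natAbs < 2*k)) : cdef ξ j = 0 := by
  simp only [cdef, if_neg h]

lemma trig_expand {k : ℕ} (ξ : Fin (2*k) → ℝ) (s : ℝ) :
    ((∑ i : Fin (2*k), ξ i * (if (i : ℕ) % 2 = 0 then Real.cos (((i:ℕ) + 1 : ℝ) * s)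
        else Real.sin (((i:ℕ) : ℝ) * s)) : ℝ) : ℂ)
      = ∑ j ∈ Finset.Ioo (-(2*k:ℤ)) (2*k), cdef ξ j * Complex.exp (Complex.I * j * s) := by
  classical
  set F : ℕ → ℂ := fun i => (xiN ξ i : ℂ) *
    (if i % 2 = 0 then ((Real.cos ((i+1)*s) : ℝ) : ℂ) else ((Real.sin (i*s) : ℝ) : ℂ)) with hF
  have hA : ((∑ i : Fin (2*k), ξ i * (if (i : ℕ) % 2 = 0 then Real.cos (((i:ℕ) + 1 : ℝ) * s)
        else Real.sin (((i:ℕ) : ℝ) * s)) : ℝ) : ℂ) = ∑ i ∈ Finset.range (2*k), F i := by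
    rw [Complex.ofReal_sum, ← Fin.sum_univ_eq_sum_range F (2*k)]
    refine Finset.sum_congr rfl fun i _ => ?_
    simp only [hF, xiN, dif_pos i.isLt, Fin.eta]
    by_cases h : (i:ℕ) % 2 = 0
    · simp only [h, if_true, reduceIte]
      push_cast
      ring
    · simp only [h, if_false, reduceIte]
      push_cast
      ring
  rw [hA, sum_range_double F k]
  -- now handle RHS
  set T1 : Finset ℤ := (Finset.range k).image (fun l : ℕ => (2*(l:ℤ)+1)) with hT1
  set T2 : Finset ℤ := (Finset.range k).image (fun l : ℕ => -(2*(l:ℤ)+1)) with hT2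
  have hdisj : Disjoint T1 T2 := by
    rw [Finset.disjoint_left]
    intro j hj1 hj2
    simp only [hT1, hT2, Finset.mem_image, Finset.mem_range] at hj1 hj2
    obtain ⟨l1, _, h1⟩ := hj1
    obtain ⟨l2, _, h2⟩ := hj2
    omega
  have hsub : T1 ∪ T2 ⊆ Finset.Ioo (-(2*k:ℤ)) (2*k) := by
    intro j hj
    simp only [Finset.mem_union, hT1, hT2, Finset.mem_image, Finset.mem_range] at hj
    simp only [Finset.mem_Ioo]
    rcases hj with ⟨l, hl, rfl⟩ | ⟨l, hl, rfl⟩ <;> omega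
  have hzero : ∀ j ∈ Finset.Ioo (-(2*k:ℤ)) (2*k), j ∉ T1 ∪ T2 →
      cdef ξ j * Complex.exp (Complex.I * j * s) = 0 := by
    intro j hj hjT
    have : cdef ξ j = 0 := by
      by_contra hc
      have hcond : j.natAbs % 2 = 1 ∧ j.natAbs < 2*k := by
        by_contra h
        exact hc (cdef_supp ξ j h)
      apply hjT
      simp only [Finset.mem_union, hT1, hT2, Finset.mem_image, Finset.mem_range]
      rcases Int.natAbs_eq j with h | h
      · exact Or.inl ⟨(j.natAbs - 1)/2, by omega, by omega⟩
      · exact Or.inr ⟨(j.natAbs - 1)/2, by omega, by omega⟩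
    rw [this, zero_mul]
  rw [← Finset.sum_subset hsub hzero, Finset.sum_union hdisj,
    Finset.sum_image (by intro a _ b _ h; simp only at h; omega), Finset.sum_image (by intro a _ b _ h; simp only at h; omega),
    ← Finset.sum_add_distrib]
  refine Finset.sum_congr rfl fun l hl => ?_
  have hlk : l < k := Finset.mem_range.mp hl
  rw [cdef_odd_pos ξ l hlk, cdef_odd_neg ξ l hlk]
  have he1 : Complex.I * ((2*(l:ℤ)+1 : ℤ) : ℂ) * (s:ℂ) = (((2*(l:ℕ)+1 : ℕ) * s : ℝ) : ℂ) * Complex.I := by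
    push_cast
    ring
  have he2 : Complex.I * ((-(2*(l:ℤ)+1) : ℤ) : ℂ) * (s:ℂ) = ((-((2*(l:ℕ)+1 : ℕ) * s) : ℝ) : ℂ) * Complex.I := by
    push_cast
    ring
  rw [he1, he2, Complex.exp_mul_I, Complex.exp_mul_I]
  rw [← Complex.ofReal_cos, ← Complex.ofReal_sin, ← Complex.ofReal_cos, ← Complex.ofReal_sin]
  rw [Real.cos_neg, Real.sin_neg, Complex.ofReal_neg]
  have hf1 : (2*l) % 2 = 0 := by omega
  have hf2 : ¬((2*l+1) % 2 = 0) := by omega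
  simp only [hF, hf1, hf2, if_true, if_false, reduceIte]
  have hc1 : ((2*l : ℕ) + 1 : ℝ) = ((2*(l:ℕ)+1 : ℕ) : ℝ) := by push_cast; ring
  have hc2 : ((2*l+1 : ℕ) : ℝ) = ((2*(l:ℕ)+1 : ℕ) : ℝ) := by push_cast; ring
  rw [hc1, hc2]
  linear_combination ((xiN ξ (2*l+1) : ℂ) * ((Real.sin ((2*(l:ℕ)+1 : ℕ) * s) : ℝ) : ℂ)) * Complex.I_sq


theorem symmetric_moment_curve_linearIndependent (k n : ℕ) (hk : 1 ≤ k) (hn : 1 ≤ n)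
    (U : ℝ → (Fin (2 * k) → ℝ))
    (hU : ∀ s : ℝ, ∀ i : Fin (2 * k),
      U s i = if (i : ℕ) % 2 = 0 then Real.cos (((i : ℕ) + 1 : ℝ) * s)
        else Real.sin (((i : ℕ) : ℝ) * s))
    (α : ℝ) (t : Fin n → ℝ) (ht : ∀ i, t i ∈ Set.Ioo α (α + Real.pi))
    (htinj : Function.Injective t)
    (m : Fin n → ℕ) (hm : ∀ i, 1 ≤ m i) (hsum : ∑ i, m i = 2 * k)
    (V : (Fin (n - 1) ⊕ ((Σ i : Fin n, Fin (m i - 1)) ⊕ Unit)) → (Fin (2 * k) → ℝ))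
    (hV1 : ∀ i : Fin (n - 1), V (Sum.inl i) = U (t ⟨i, lt_of_lt_of_le i.2 (Nat.sub_le n 1)⟩) - U (t ⟨n - 1, Nat.sub_lt hn Nat.one_pos⟩))
    (hV2 : ∀ p : (Σ i : Fin n, Fin (m i - 1)), V (Sum.inr (Sum.inl p)) = iteratedDeriv ((p.2 : ℕ) + 1) U (t p.1))
    (hV3 : V (Sum.inr (Sum.inr ())) = iteratedDeriv (m ⟨0, hn⟩) U (t ⟨0, hn⟩)) :
    LinearIndependent ℝ V := by
  classical
  have hnk : n ≤ 2*k := by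
    calc n = ∑ _i : Fin n, 1 := by simp
    _ ≤ ∑ i, m i := Finset.sum_le_sum (fun i _ => hm i)
    _ = 2*k := hsum
  have hcard : Fintype.card (Fin (n - 1) ⊕ ((Σ i : Fin n, Fin (m i - 1)) ⊕ Unit)) = 2*k := by
    have h1 : ∑ i : Fin n, (m i - 1) = 2*k - n := by
      have h2 : ∑ i : Fin n, (m i - 1) + ∑ _i : Fin n, 1 = ∑ i : Fin n, m i := by
        rw [← Finset.sum_add_distrib]
        exact Finset.sum_congr rfl fun i _ => by have := hm i; omega
      simp only [Finset.sum_const, Finset.card_univ, Fintype.card_fin, smul_eq_mul, mul_one]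
        at h2
      omega
    simp only [Fintype.card_sum, Fintype.card_sigma, Fintype.card_fin, Fintype.card_unit, h1]
    omega
  suffices key : ∀ ξ : Fin (2*k) → ℝ, (∀ v, ∑ i, V v i * ξ i = 0) → ξ = 0 by
    let e : (Fin (n - 1) ⊕ ((Σ i : Fin n, Fin (m i - 1)) ⊕ Unit)) ≃ Fin (2*k) :=
      Fintype.equivFinOfCardEq hcard
    let MM : Matrix (Fin (2*k)) (Fin (2*k)) ℝ := Matrix.of fun v i => V (e.symm v) i
    have hdet : MM.det ≠ 0 := by
      intro h0
      obtain ⟨ξ, hξne, hξ⟩ := (Matrix.exists_mulVec_eq_zero_iff).mpr h0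
      apply hξne
      apply key ξ
      intro v
      have h3 := congrFun hξ (e v)
      simpa [MM, Matrix.mulVec, dotProduct] using h3
    have hli : LinearIndependent ℝ (fun v : Fin (2*k) => V (e.symm v)) := by
      rw [Fintype.linearIndependent_iff]
      intro g hg v0
      by_contra hv0
      have hex : ∃ w ≠ 0, MM.transpose.mulVec w = 0 := by
        refine ⟨g, fun hg0 => hv0 (by rw [hg0]; rfl), ?_⟩
        funext i
        have h4 := congrFun hg i
        simpa [Matrix.mulVec, dotProduct, Matrix.transpose_apply, MM, mul_comm,
          Finset.sum_apply] using h4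
      have hdetT : (MM.transpose).det ≠ 0 := by rwa [Matrix.det_transpose]
      exact hdetT (Matrix.exists_mulVec_eq_zero_iff.mp hex)
    exact (linearIndependent_equiv e.symm).mp hli
  intro ξ hξv
  have hUeq : U = fun (s : ℝ) (i : Fin (2*k)) => if (i:ℕ) % 2 = 0 then Real.cos (((i:ℕ) + 1 : ℝ) * s)
      else Real.sin (((i:ℕ) : ℝ) * s) := by
    funext s i
    exact hU s i
  have hUc : ContDiff ℝ ⊤ U := by
    rw [hUeq, contDiff_pi]
    intro i
    by_cases h : (i:ℕ) % 2 = 0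
    · simp only [h, reduceIte, if_true]
      exact Real.contDiff_cos.comp (contDiff_const.mul contDiff_id)
    · simp only [h, reduceIte, if_false]
      exact Real.contDiff_sin.comp (contDiff_const.mul contDiff_id)
  set f : ℝ → ℝ := fun s => ∑ i : Fin (2*k), ξ i * U s i with hfdef
  have hfc : ContDiff ℝ ⊤ f :=
    ContDiff.sum fun i _ => contDiff_const.mul ((contDiff_pi.mp hUc) i)
  set φ : (Fin (2*k) → ℝ) →L[ℝ] ℝ :=
    ∑ i : Fin (2*k), ξ i • ContinuousLinearMap.proj i with hφdef
  have hφ : ∀ w : Fin (2*k) → ℝ, φ w = ∑ i : Fin (2*k), ξ i * w i := by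
    intro w
    simp [hφdef, ContinuousLinearMap.sum_apply, ContinuousLinearMap.smul_apply,
      ContinuousLinearMap.proj_apply, smul_eq_mul]
  have hder : ∀ (r : ℕ) (τ : ℝ), iteratedDeriv r f τ = ∑ i : Fin (2*k), ξ i * (iteratedDeriv r U τ) i := by
    intro r τ
    have h1 : f = fun x => φ (U x) := by funext x; rw [hφ]
    rw [h1, iteratedDeriv_clm_comp φ U hUc r]
    exact hφ _
  set ilast : Fin n := ⟨n-1, Nat.sub_lt hn Nat.one_pos⟩ with hilast
  set i0 : Fin n := ⟨0, hn⟩ with hi0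
  have hflast : ∀ i : Fin n, f (t i) = f (t ilast) := by
    intro i
    by_cases h : (i:ℕ) < n - 1
    · have h5 := hξv (Sum.inl ⟨(i:ℕ), h⟩)
      rw [hV1 ⟨(i:ℕ), h⟩] at h5
      have hieq : (⟨((⟨(i:ℕ), h⟩ : Fin (n-1)) : ℕ),
          lt_of_lt_of_le (⟨(i:ℕ), h⟩ : Fin (n-1)).2 (Nat.sub_le n 1)⟩ : Fin n) = i := by
        apply Fin.ext
        rfl
      rw [hieq] at h5
      simp only [Pi.sub_apply, sub_mul] at h5
      rw [Finset.sum_sub_distrib] at h5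
      have h6 := sub_eq_zero.mp h5
      have ha : f (t i) = ∑ i', U (t i) i' * ξ i' := by
        rw [hfdef]
        exact Finset.sum_congr rfl fun _ _ => mul_comm _ _
      have hb : f (t ilast) = ∑ i', U (t ilast) i' * ξ i' := by
        rw [hfdef]
        exact Finset.sum_congr rfl fun _ _ => mul_comm _ _
      rw [ha, hb, h6]
    · have hieq : i = ilast := by
        apply Fin.ext
        simp only [hilast]
        omega
      rw [hieq]
  have hfderiv : ∀ (i : Fin n) (j : ℕ), 1 ≤ j → j < m i → iteratedDeriv j f (t i) = 0 := by
    intro i j hj1 hjm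
    have h5 := hξv (Sum.inr (Sum.inl ⟨i, ⟨j-1, by omega⟩⟩))
    rw [hV2 ⟨i, ⟨j-1, by omega⟩⟩] at h5
    have hj' : ((⟨j-1, by omega⟩ : Fin (m i - 1)) : ℕ) + 1 = j := by
      simp only []
      omega
    rw [hj'] at h5
    rw [hder j (t i)]
    rw [Finset.sum_congr rfl fun i' _ => mul_comm (ξ i') _]
    exact h5
  have hftop : iteratedDeriv (m i0) f (t i0) = 0 := by
    have h5 := hξv (Sum.inr (Sum.inr ()))
    rw [hV3] at h5
    rw [hder (m i0) (t i0)]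
    rw [Finset.sum_congr rfl fun i' _ => mul_comm (ξ i') _]
    exact h5
  set S : Finset ℤ := Finset.Ioo (-(2*k:ℤ)) (2*k) with hS
  set c : ℤ → ℂ := cdef ξ with hc
  have hfS : ∀ s : ℝ, ((f s : ℝ) : ℂ) = ∑ j ∈ S, c j * Complex.exp (Complex.I * j * s) := by
    intro s
    have h6 := trig_expand ξ s
    rw [hfdef]
    rw [hS, hc]
    rw [← h6]
    congr 1
    refine Finset.sum_congr rfl fun i _ => ?_
    rw [hUeq]
  have hW : ∀ (r : ℕ) (τ : ℝ), iteratedDeriv r f τ = 0 →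
      ∑ j ∈ S, c j * (Complex.I*j)^r * Complex.exp (Complex.I*j*τ) = 0 := by
    intro r τ h0
    have h1 : iteratedDeriv r (fun x : ℝ => Complex.ofRealCLM (f x)) τ
        = Complex.ofRealCLM (iteratedDeriv r f τ) := by
      rw [iteratedDeriv_clm_comp Complex.ofRealCLM f hfc r]
    have h2 : (fun x : ℝ => Complex.ofRealCLM (f x))
        = fun s : ℝ => ∑ j ∈ S, c j * Complex.exp (Complex.I*j*s) := by
      funext s
      rw [Complex.ofRealCLM_apply]
      exact hfS s
    rw [h2, iteratedDeriv_trigsum S c r, h0] at h1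
    simpa using h1
  set g : ℝ → ℝ := fun x => f x - f (t ilast) with hg
  have hgc : ContDiff ℝ ⊤ g := hfc.sub contDiff_const
  set σ : Equiv.Perm (Fin n) := Tuple.sort t with hσ
  have hts : StrictMono (t ∘ σ) :=
    (Tuple.monotone_sort t).strictMono_of_injective (htinj.comp σ.injective)
  set t0 : ℕ → ℝ := fun i => if h : i < n then t (σ ⟨i,h⟩) else 0 with ht0
  set μ0 : ℕ → ℕ := fun i => if h : i < n then m (σ ⟨i,h⟩) + (if σ ⟨i,h⟩ = i0 then 1 else 0) else 0
    with hμ0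
  have hμ0sum : ∑ i ∈ Finset.range n, μ0 i = 2*k+1 := by
    have h7 : ∑ i ∈ Finset.range n, μ0 i = ∑ i : Fin n, μ0 (i : ℕ) :=
      (Fin.sum_univ_eq_sum_range (fun i => μ0 i) n).symm
    rw [h7]
    have h8 : ∀ i : Fin n, μ0 (i : ℕ) = m (σ i) + (if σ i = i0 then 1 else 0) := by
      intro i
      simp only [hμ0, dif_pos i.isLt, Fin.eta]
    rw [Finset.sum_congr rfl fun i _ => h8 i]
    rw [Equiv.sum_comp σ (fun i => m i + (if i = i0 then 1 else 0))]
    rw [Finset.sum_add_distrib, hsum, Finset.sum_ite_eq' Finset.univ i0 (fun _ => 1)]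
    simp
  obtain ⟨u, ν, humono, humem, husum, huz⟩ :=
    rolle_multiplicity g hgc α (α+Real.pi) n hn t0 μ0
      (by
        intro i hi
        simp only [ht0, dif_pos (by omega : i < n), dif_pos hi]
        exact hts (by exact Fin.mk_lt_mk.mpr (by omega)))
      (by
        intro i hi
        simp only [ht0, dif_pos hi]
        exact ht _)
      (by
        intro i hi
        simp only [hμ0, dif_pos hi]
        have := hm (σ ⟨i, hi⟩)
        omega)
      (by
        intro i hi j hj
        simp only [hμ0, dif_pos hi] at hj
        simp only [ht0, dif_pos hi]
        set i' : Fin n := σ ⟨i, hi⟩ with hi'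
        rcases Nat.eq_zero_or_pos j with hj0 | hj0
        · subst hj0
          rw [iteratedDeriv_zero, hg]
          rw [sub_eq_zero]
          exact hflast i'
        · rw [hg, iteratedDeriv_sub_const' f (f (t ilast)) j hj0]
          by_cases hσ0 : i' = i0
          · rw [if_pos hσ0] at hj
            rcases Nat.lt_or_ge j (m i') with hlt | hge
            · exact hfderiv i' j hj0 hlt
            · have : j = m i' := by omega
              rw [this, hσ0]
              exact hftop
          · rw [if_neg hσ0] at hj
            exact hfderiv i' j hj0 (by omega))
  set L : ℕ := 2*n-1 with hL
  have hνsum : ∑ l ∈ Finset.range L, ν l = 2*k := by omega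
  have huf : ∀ l < L, ∀ r < ν l, iteratedDeriv (r+1) f (u l) = 0 := by
    intro l hl r hr
    have h9 := huz l hl r hr
    rwa [hg, iteratedDeriv_sub_const' f (f (t ilast)) (r+1) (by omega)] at h9
  set q : ℕ → ℝ := fun l => if l < L then u l else u (l - L) + Real.pi with hq
  set κ : ℕ → ℕ := fun l => if l < L then ν l else ν (l - L) with hκ
  set c' : ℤ → ℂ := fun j => c j * j with hc'
  have hq0 : ∀ l < 2*L, ∀ r < κ l,
      ∑ j ∈ S, c j * (Complex.I*j)^(r+1) * Complex.exp (Complex.I*j*(q l)) = 0 := by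
    intro l hl r hr
    by_cases h : l < L
    · have hql : q l = u l := if_pos h
      have hκl : κ l = ν l := if_pos h
      rw [hql]
      exact hW (r+1) (u l) (huf l h r (by rwa [hκl] at hr))
    · have hql : q l = u (l - L) + Real.pi := if_neg h
      have hκl : κ l = ν (l - L) := if_neg h
      have hlL : l - L < L := by omega
      have base := hW (r+1) (u (l-L)) (huf (l-L) hlL r (by rwa [hκl] at hr))
      rw [hql]
      have hterm : ∀ j ∈ S, c j * (Complex.I*j)^(r+1) * Complex.exp (Complex.I*j*(((u (l-L) + Real.pi : ℝ)) : ℂ))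
          = -(c j * (Complex.I*j)^(r+1) * Complex.exp (Complex.I*j*(u (l-L)))) := by
        intro j hj
        by_cases hcj : c j = 0
        · rw [hcj]
          ring
        · have hodd : j.natAbs % 2 = 1 := by
            by_contra hno
            exact hcj (cdef_supp ξ j (fun hcond => hno hcond.1))
          have hjodd : Odd j := by
            rw [← Int.natAbs_odd]
            exact Nat.odd_iff.mpr hodd
          have hsplit : Complex.exp (Complex.I*j*(((u (l-L) + Real.pi : ℝ)) : ℂ))
              = Complex.exp (Complex.I*j*(u (l-L))) * Complex.exp ((j:ℂ) * ((Real.pi:ℂ) * Complex.I)) := by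
            rw [← Complex.exp_add]
            congr 1
            push_cast
            ring
          rw [hsplit, Complex.exp_int_mul, Complex.exp_pi_mul_I, Odd.neg_one_zpow hjodd]
          ring
      rw [Finset.sum_congr rfl hterm, Finset.sum_neg_distrib, base, neg_zero]
  have hq1 : ∀ l < 2*L, ∀ r < κ l,
      ∑ j ∈ S, c' j * (j:ℂ)^r * (Complex.exp (Complex.I * (q l)))^(j:ℤ) = 0 := by
    intro l hl r hr
    have h6 := hq0 l hl r hr
    have h7 : ∀ j ∈ S, c j * (Complex.I*j)^(r+1) * Complex.exp (Complex.I*j*(q l))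
        = Complex.I^(r+1) * (c' j * (j:ℂ)^r * (Complex.exp (Complex.I*(q l)))^(j:ℤ)) := by
      intro j hj
      have hz2 : Complex.exp (Complex.I*j*(q l)) = (Complex.exp (Complex.I*(q l)))^(j:ℤ) := by
        rw [← Complex.exp_int_mul]
        congr 1
        push_cast
        ring
      rw [hz2, mul_pow, hc']
      ring
    rw [Finset.sum_congr rfl h7, ← Finset.mul_sum] at h6
    exact (mul_eq_zero.mp h6).resolve_left (pow_ne_zero _ Complex.I_ne_zero)
  set N : ℕ := 2*k-1 with hN
  set P : Polynomial ℂ := ∑ j ∈ S, Polynomial.monomial (j + (N:ℤ)).toNat (c' j) with hP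
  have hS0 : ∀ j ∈ S, 0 ≤ j + (N:ℤ) := by
    intro j hj
    rw [hS, Finset.mem_Ioo] at hj
    omega
  have hdvd : ∀ l ∈ Finset.range (2*L),
      (Polynomial.X - Polynomial.C (Complex.exp (Complex.I * (q l))))^(κ l) ∣ P := by
    intro l hl
    exact pow_dvd_P S c' N hS0 _ (Complex.exp_ne_zero _) (κ l) (hq1 l (Finset.mem_range.mp hl))
  have hqmem : ∀ l < 2*L, q l ∈ Set.Ioo α (α + 2*Real.pi) := by
    have hπ := Real.pi_pos
    intro l hl
    by_cases h : l < L
    · have h10 := humem l h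
      rw [hq]
      simp only [if_pos h]
      exact ⟨h10.1, by linarith [h10.2]⟩
    · have h10 := humem (l - L) (by omega)
      rw [hq]
      simp only [if_neg h]
      exact ⟨by linarith [h10.1], by linarith [h10.2]⟩
  have hchain := chain_lt humono
  have hqinj : ∀ l1 < 2*L, ∀ l2 < 2*L, l1 < l2 → q l1 ≠ q l2 := by
    intro l1 h1 l2 h2 h12
    rw [hq]
    by_cases ha1 : l1 < L <;> by_cases ha2 : l2 < L
    · simp only [if_pos ha1, if_pos ha2]
      exact ne_of_lt (hchain l1 l2 h12 ha2)
    · simp only [if_pos ha1, if_neg ha2]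
      have h10 := humem l1 ha1
      have h11 := humem (l2 - L) (by omega)
      have : u l1 < u (l2 - L) + Real.pi := by linarith [h10.2, h11.1]
      exact ne_of_lt this
    · omega
    · simp only [if_neg ha1, if_neg ha2]
      have : u (l1 - L) < u (l2 - L) := hchain (l1 - L) (l2 - L) (by omega) (by omega)
      intro hcon
      linarith
  have hpair : (↑(Finset.range (2*L)) : Set ℕ).Pairwise
      ((Function.onFun IsCoprime fun l => (Polynomial.X - Polynomial.C (Complex.exp (Complex.I * (q l))))^(κ l))) := by
    intro l1 h1 l2 h2 hne
    simp only [Finset.coe_range, Set.mem_Iio] at h1 h2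
    apply isCoprime_pow_X_sub_C
    intro hexp
    have hqne : q l1 ≠ q l2 := by
      rcases Nat.lt_or_ge l1 l2 with h' | h'
      · exact hqinj l1 h1 l2 h2 h'
      · exact (hqinj l2 h2 l1 h1 (by omega)).symm
    apply hqne
    have hm1 := hqmem l1 h1
    have hm2 := hqmem l2 h2
    have habs : |q l1 - q l2| < 2*Real.pi := by
      rw [abs_lt]
      constructor <;> [linarith [hm1.1, hm2.2]; linarith [hm1.2, hm2.1]]
    exact exp_I_inj habs hexp
  have hPdvd : (∏ l ∈ Finset.range (2*L),
      (Polynomial.X - Polynomial.C (Complex.exp (Complex.I * (q l))))^(κ l)) ∣ P :=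
    Finset.prod_dvd_of_coprime hpair hdvd
  have hκsum : ∑ l ∈ Finset.range (2*L), κ l = 4*k := by
    have h2L : 2*L = L + L := by ring
    rw [h2L, sum_range_block]
    have ha : ∀ l ∈ Finset.range L, κ l = ν l := by
      intro l hl
      rw [hκ]
      simp only [if_pos (Finset.mem_range.mp hl)]
    have hb : ∀ l ∈ Finset.range L, κ (L + l) = ν l := by
      intro l hl
      rw [hκ]
      simp only [if_neg (by omega : ¬ L + l < L)]
      congr 1
      omega
    rw [Finset.sum_congr rfl ha, Finset.sum_congr rfl hb, hνsum]
    ring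
  have hP0 : P = 0 := by
    by_contra hP0
    have hdeg1 : P.natDegree ≤ 4*k-2 := by
      rw [hP]
      apply Polynomial.natDegree_sum_le_of_forall_le
      intro j hj
      refine le_trans (Polynomial.natDegree_monomial_le _) ?_
      rw [hS, Finset.mem_Ioo] at hj
      omega
    have hmono : ∀ l ∈ Finset.range (2*L),
        ((Polynomial.X - Polynomial.C (Complex.exp (Complex.I * (q l))))^(κ l)).Monic :=
      fun l _ => (Polynomial.monic_X_sub_C _).pow _
    have hdeg2 : (∏ l ∈ Finset.range (2*L),
        (Polynomial.X - Polynomial.C (Complex.exp (Complex.I * (q l))))^(κ l)).natDegree = 4*k := by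
      rw [Polynomial.natDegree_prod _ _ (fun l hl => (hmono l hl).ne_zero)]
      rw [Finset.sum_congr rfl (fun l _ => by
        rw [Polynomial.natDegree_pow, Polynomial.natDegree_X_sub_C, mul_one])]
      exact hκsum
    have hle := Polynomial.natDegree_le_of_dvd hPdvd hP0
    omega
  have hc'0 : ∀ j ∈ S, c' j = 0 := by
    intro j hj
    have hco := congrArg (fun p => Polynomial.coeff p ((j + (N:ℤ)).toNat)) hP0
    simp only [hP, Polynomial.finset_sum_coeff, Polynomial.coeff_monomial,
      Polynomial.coeff_zero] at hco
    rw [Finset.sum_eq_single_of_mem j hj (fun j' hj' hne => by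
      rw [if_neg]
      intro hcon
      apply hne
      have e1 := hS0 j' hj'
      have e2 := hS0 j hj
      omega)] at hco
    rw [if_pos rfl] at hco
    exact hco
  have hc0 : ∀ j ∈ S, j ≠ 0 → c j = 0 := by
    intro j hj hj0
    have h11 := hc'0 j hj
    rw [hc'] at h11
    simp only [] at h11
    exact (mul_eq_zero.mp h11).resolve_right (Int.cast_ne_zero.mpr hj0)
  funext i
  have hik : (i:ℕ) < 2*k := i.isLt
  set l : ℕ := (i:ℕ)/2 with hldef
  have hlk : l < k := by omega
  have hmem1 : (2*(l:ℤ)+1) ∈ S := by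
    rw [hS, Finset.mem_Ioo]
    omega
  have hmem2 : (-(2*(l:ℤ)+1)) ∈ S := by
    rw [hS, Finset.mem_Ioo]
    omega
  have h1 := hc0 _ hmem1 (by omega)
  have h2 := hc0 _ hmem2 (by omega)
  rw [hc] at h1 h2
  have e1 : ((xiN ξ (2*l) : ℂ) - Complex.I * (xiN ξ (2*l+1) : ℂ)) / 2 = 0 := by
    rw [← cdef_odd_pos ξ l hlk]
    exact h1
  have e2 : ((xiN ξ (2*l) : ℂ) + Complex.I * (xiN ξ (2*l+1) : ℂ)) / 2 = 0 := by
    rw [← cdef_odd_neg ξ l hlk]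
    exact h2
  have ha : (xiN ξ (2*l) : ℂ) = 0 := by linear_combination e1 + e2
  have hb : (xiN ξ (2*l+1) : ℂ) = 0 := by
    linear_combination Complex.I*e1 - Complex.I*e2 + (xiN ξ (2*l+1) : ℂ) * Complex.I_sq
  have ha' : xiN ξ (2*l) = 0 := by exact_mod_cast ha
  have hb' : xiN ξ (2*l+1) = 0 := by exact_mod_cast hb
  have hxi : ξ i = xiN ξ (i:ℕ) := by
    rw [xiN]
    simp only [dif_pos hik, Fin.eta]
  have hcase : (i:ℕ) = 2*l ∨ (i:ℕ) = 2*l+1 := by omega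
  show ξ i = 0
  rcases hcase with h | h
  · rw [hxi, h, ha']
  · rw [hxi, h, hb']
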